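/- Let X be a complex Banach space, let g : [0,∞) → X be locally Bochner integrable, let x > 0 and C > 0, and suppose that ‖e^{-xt} ∫₀ᵗ e^{xs} g(s) ds‖ ≤ C for every t ≥ 0. Then for every y ∈ ℝ, writing z = x + iy, one has ‖e^{-xt} ∫₀ᵗ e^{zs} g(s) ds‖ ≤ C(1 + |y|/x) for every t ≥ 0. -/

import Mathlib

open MeasureTheory Filter Set

theorem stmt_0 {X : Type*} [NormedAddCommGroup X] [NormedSpace ℂ X] [CompleteSpace X]
    (g : ℝ → X) (hg : LocallyIntegrableOn g (Set.Ici 0))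
    (x C : ℝ) (hx : 0 < x) (hC : 0 < C)
    (hbound : ∀ t : ℝ, 0 ≤ t →
      ‖Real.exp (-x * t) • ∫ s in Set.Ioc (0 : ℝ) t, Real.exp (x * s) • g s‖ ≤ C) :
    ∀ y : ℝ, ∀ t : ℝ, 0 ≤ t →
      ‖Real.exp (-x * t) •
          ∫ s in Set.Ioc (0 : ℝ) t, Complex.exp (((x : ℂ) + y * Complex.I) * s) • g s‖
        ≤ C * (1 + |y| / x) := by
  intro y t ht
  set a : ℂ := (y : ℂ) * Complex.I with ha
  set E : ℝ → ℂ := fun u => Complex.exp (a * u) with hE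
  set c : ℝ → ℂ := fun u => a * Complex.exp (a * u) with hc
  set h : ℝ → X := fun s => Real.exp (x * s) • g s with hh
  set F : ℝ → X := fun u => ∫ s in Set.Ioc (0 : ℝ) u, h s with hF
  set I : Set ℝ := Set.Ioc (0 : ℝ) t with hI
  -- basic integrability
  have hgI : IntegrableOn g (Set.Icc 0 t) :=
    hg.integrableOn_compact_subset Set.Icc_subset_Ici_self isCompact_Icc
  have hhIcc : IntegrableOn h (Set.Icc 0 t) := by
    refine Integrable.mono' (hgI.norm.const_mul (Real.exp (x * t)))
      ((Real.continuous_exp.comp (continuous_const.mul continuous_id)).aestronglyMeasurable.smul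
        hgI.1) ?_
    rw [ae_restrict_iff' measurableSet_Icc]
    filter_upwards with s hs
    rw [norm_smul, Real.norm_eq_abs, abs_of_pos (Real.exp_pos _)]
    exact mul_le_mul_of_nonneg_right
      (Real.exp_le_exp.2 (mul_le_mul_of_nonneg_left hs.2 hx.le)) (norm_nonneg _)
  have hhu : ∀ u : ℝ, u ≤ t → IntegrableOn h (Set.Ioc 0 u) :=
    fun u hu => hhIcc.mono_set fun s hs => ⟨hs.1.le, hs.2.trans hu⟩
  have hhI : IntegrableOn h I := hhu t le_rfl
  have hcE : Continuous E := Complex.continuous_exp.comp (continuous_const.mul Complex.continuous_ofReal)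
  have hcc : Continuous c := continuous_const.mul hcE
  have hEnorm : ∀ u : ℝ, ‖E u‖ = 1 := by
    intro u
    simp [hE, Complex.norm_exp, ha]
  have hcnorm : ∀ u : ℝ, ‖c u‖ = |y| := by
    intro u
    rw [hc]
    simp only [norm_mul]
    rw [hEnorm u, mul_one, ha]
    simp [Complex.norm_def, Complex.normSq_mul]
  -- FTC for E
  have hder : ∀ u : ℝ, HasDerivAt E (c u) u := by
    intro u
    have h1 : HasDerivAt (fun z : ℂ => Complex.exp (a * z)) (a * Complex.exp (a * u)) (u : ℂ) := by
      have h0 := (Complex.hasDerivAt_exp (a * u)).comp (u : ℂ)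
        ((hasDerivAt_id (u : ℂ)).const_mul a)
      simp only [Function.comp_def, mul_one] at h0
      rwa [mul_comm] at h0
    exact h1.comp_ofReal
  have hftc : ∀ s : ℝ, s ≤ t → (∫ u in Set.Ioc s t, c u) = E t - E s := by
    intro s hs
    have := intervalIntegral.integral_eq_sub_of_hasDerivAt (f := E) (f' := c)
      (fun u _ => hder u) ((hcc.intervalIntegrable s t))
    rwa [intervalIntegral.integral_of_le hs] at this
  -- the bound on F
  have hFb : ∀ u : ℝ, 0 ≤ u → ‖F u‖ ≤ C * Real.exp (x * u) := by
    intro u hu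
    have := hbound u hu
    rw [norm_smul, Real.norm_eq_abs, abs_of_pos (Real.exp_pos _)] at this
    have h2 : Real.exp (-x * u) * ‖F u‖ ≤ C := this
    have h3 := mul_le_mul_of_nonneg_left h2 (Real.exp_pos (x * u)).le
    calc ‖F u‖ = Real.exp (x * u) * (Real.exp (-x * u) * ‖F u‖) := by
          rw [← mul_assoc, ← Real.exp_add]; norm_num
      _ ≤ Real.exp (x * u) * C := h3
      _ = C * Real.exp (x * u) := mul_comm _ _
  -- the key identity
  have hstep1 : (∫ s in I, Complex.exp (((x : ℂ) + y * Complex.I) * s) • g s)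
      = ∫ s in I, E s • h s := by
    refine setIntegral_congr_fun measurableSet_Ioc fun s _ => ?_
    rw [hE, hh, ha]
    have : ((x : ℂ) + (y : ℂ) * Complex.I) * s = (y : ℂ) * Complex.I * s + ((x * s : ℝ) : ℂ) := by
      push_cast; ring
    rw [this, Complex.exp_add, mul_smul, ← Complex.ofReal_exp, Complex.coe_smul]
  have hEh_int : IntegrableOn (fun s => E s • h s) I := by
    refine Integrable.mono' hhI.norm (hcE.aestronglyMeasurable.smul hhI.1) ?_
    filter_upwards with s
    rw [norm_smul, hEnorm, one_mul]
  have hEth_int : IntegrableOn (fun s => E t • h s) I := hhI.smul (E t)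
  have hinner_eq : ∀ s ∈ I, (∫ u in Set.Ioc s t, c u • h s) = (E t - E s) • h s := by
    intro s hs
    rw [integral_smul_const, hftc s hs.2]
  have hinner_int : IntegrableOn (fun s => ∫ u in Set.Ioc s t, c u • h s) I := by
    refine IntegrableOn.congr_fun ?_ (fun s hs => (hinner_eq s hs).symm) measurableSet_Ioc
    refine Integrable.mono' (hhI.norm.const_mul 2)
      (((continuous_const.sub hcE).aestronglyMeasurable).smul hhI.1) ?_
    filter_upwards with s
    rw [norm_smul]
    refine mul_le_mul_of_nonneg_right ?_ (norm_nonneg _)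
    calc ‖E t - E s‖ ≤ ‖E t‖ + ‖E s‖ := norm_sub_le _ _
      _ = 2 := by rw [hEnorm, hEnorm]; norm_num
  have hstep2 : (∫ s in I, E s • h s)
      = E t • F t - ∫ s in I, ∫ u in Set.Ioc s t, c u • h s := by
    have heq : ∀ s ∈ I, E s • h s = E t • h s - ∫ u in Set.Ioc s t, c u • h s := by
      intro s hs
      rw [hinner_eq s hs, sub_smul]
      abel
    rw [setIntegral_congr_fun measurableSet_Ioc heq, integral_sub hEth_int hinner_int,
      integral_smul]
  -- Fubini
  have hswap : (∫ s in I, ∫ u in Set.Ioc s t, c u • h s)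
      = ∫ u in I, c u • F u := by
    set K : ℝ → ℝ → X := fun s u => if s < u then c u • h s else 0 with hK
    have hKint : Integrable (Function.uncurry K)
        ((volume.restrict I).prod (volume.restrict I)) := by
      have h1 : Integrable (fun z : ℝ × ℝ => c z.1 • h z.2)
          ((volume.restrict I).prod (volume.restrict I)) :=
        (hcc.integrableOn_Ioc).smul_prod hhI
      have h2 : Integrable (fun z : ℝ × ℝ => c z.2 • h z.1)
          ((volume.restrict I).prod (volume.restrict I)) := h1.swap
      have h3 : Function.uncurry K =
          {p : ℝ × ℝ | p.1 < p.2}.indicator (fun z : ℝ × ℝ => c z.2 • h z.1) := by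
        ext p
        by_cases hp : p.1 < p.2
        · simp [Function.uncurry, hK, hp, Set.indicator_of_mem, Set.mem_setOf_eq]
        · simp [Function.uncurry, hK, hp, Set.indicator_of_notMem, Set.mem_setOf_eq]
      rw [h3]
      exact h2.indicator (measurableSet_lt measurable_fst measurable_snd)
    have hL : ∀ s ∈ I, (∫ u in Set.Ioc s t, c u • h s) = ∫ u in I, K s u := by
      intro s hs
      have hind : (fun u => K s u) = (Set.Ioi s).indicator (fun u => c u • h s) := by
        ext u
        by_cases hu : s < u
        · simp [hK, hu, Set.indicator_of_mem, Set.mem_Ioi]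
        · simp [hK, hu, Set.indicator_of_notMem, Set.mem_Ioi]
      rw [hind, setIntegral_indicator measurableSet_Ioi]
      congr 1
      rw [hI, Set.Ioc_inter_Ioi, max_eq_right hs.1.le]
    have hR : ∀ u ∈ I, (∫ s in I, K s u) = c u • F u := by
      intro u hu
      have hind : (fun s => K s u) = (Set.Iio u).indicator (fun s => c u • h s) := by
        ext s
        by_cases hs : s < u
        · simp [hK, hs, Set.indicator_of_mem, Set.mem_Iio]
        · simp [hK, hs, Set.indicator_of_notMem, Set.mem_Iio]
      have hset : I ∩ Set.Iio u = Set.Ioo 0 u := by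
        ext s
        simp only [hI, Set.mem_inter_iff, Set.mem_Ioc, Set.mem_Iio, Set.mem_Ioo]
        exact ⟨fun h => ⟨h.1.1, h.2⟩, fun h => ⟨⟨h.1, h.2.le.trans hu.2⟩, h.2⟩⟩
      rw [hind, setIntegral_indicator measurableSet_Iio, hset,
        ← integral_Ioc_eq_integral_Ioo, hF, ← integral_smul]
    calc (∫ s in I, ∫ u in Set.Ioc s t, c u • h s)
        = ∫ s in I, ∫ u in I, K s u := setIntegral_congr_fun measurableSet_Ioc hL
      _ = ∫ u in I, ∫ s in I, K s u := integral_integral_swap hKint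
      _ = ∫ u in I, c u • F u := setIntegral_congr_fun measurableSet_Ioc hR
  have hkey : (∫ s in I, Complex.exp (((x : ℂ) + y * Complex.I) * s) • g s)
      = E t • F t - ∫ u in I, c u • F u := by
    rw [hstep1, hstep2, hswap]
  -- final estimate
  have hJ : Integrable (fun u => |y| * (C * Real.exp (x * u))) (volume.restrict I) :=
    (Real.continuous_exp.comp (continuous_const.mul continuous_id)).integrableOn_Ioc.const_mul
      _ |>.const_mul _
  have hnorm2 : ‖∫ u in I, c u • F u‖ ≤ ∫ u in I, |y| * (C * Real.exp (x * u)) := by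
    refine norm_integral_le_of_norm_le hJ ?_
    rw [ae_restrict_iff' measurableSet_Ioc]
    filter_upwards with u hu
    rw [norm_smul, hcnorm]
    exact mul_le_mul_of_nonneg_left (hFb u hu.1.le) (abs_nonneg _)
  have hint_exp : (∫ u in I, Real.exp (x * u)) = (Real.exp (x * t) - 1) / x := by
    have hder2 : ∀ u : ℝ, HasDerivAt (fun v => Real.exp (x * v) / x) (Real.exp (x * u)) u := by
      intro u
      have := ((Real.hasDerivAt_exp (x * u)).comp u
        ((hasDerivAt_id u).const_mul x)).div_const x
      simpa [mul_comm, mul_one, mul_div_assoc, mul_div_cancel_left₀ _ hx.ne'] using this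
    have := intervalIntegral.integral_eq_sub_of_hasDerivAt (fun u _ => hder2 u)
      ((Real.continuous_exp.comp (continuous_const.mul continuous_id)).intervalIntegrable 0 t)
    rw [intervalIntegral.integral_of_le ht] at this
    rw [hI, this, mul_zero, Real.exp_zero, div_sub_div_same]
  have hJval : (∫ u in I, |y| * (C * Real.exp (x * u)))
      = |y| * C * ((Real.exp (x * t) - 1) / x) := by
    rw [integral_const_mul, integral_const_mul, hint_exp]; ring
  have hFt : Real.exp (-x * t) * ‖F t‖ ≤ C := by
    have := hbound t ht
    rwa [norm_smul, Real.norm_eq_abs, abs_of_pos (Real.exp_pos _)] at this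
  rw [hkey, norm_smul, Real.norm_eq_abs, abs_of_pos (Real.exp_pos _)]
  calc Real.exp (-x * t) * ‖E t • F t - ∫ u in I, c u • F u‖
      ≤ Real.exp (-x * t) * (‖E t • F t‖ + ‖∫ u in I, c u • F u‖) := by
        exact mul_le_mul_of_nonneg_left (norm_sub_le _ _) (Real.exp_pos _).le
    _ = Real.exp (-x * t) * ‖F t‖
        + Real.exp (-x * t) * ‖∫ u in I, c u • F u‖ := by
        rw [norm_smul, hEnorm, one_mul, mul_add]
    _ ≤ C + Real.exp (-x * t) * (|y| * C * ((Real.exp (x * t) - 1) / x)) := by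
        refine add_le_add hFt (mul_le_mul_of_nonneg_left ?_ (Real.exp_pos _).le)
        rw [← hJval]; exact hnorm2
    _ ≤ C + C * (|y| / x) := by
        refine add_le_add le_rfl ?_
        have h2 : (0:ℝ) < Real.exp (x * t) := Real.exp_pos _
        rw [neg_mul, Real.exp_neg, inv_mul_le_iff₀ h2]
        calc |y| * C * ((Real.exp (x * t) - 1) / x)
            ≤ |y| * C * (Real.exp (x * t) / x) := by gcongr; linarith
          _ = Real.exp (x * t) * (C * (|y| / x)) := by ring
    _ = C * (1 + |y| / x) := by ring
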